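/- Let F be a field with |F| > 2, n ≥ 3, V an n-dimensional vector space over F, G a codimension-2 subspace of V, and S a linear subspace of End(V) such that every element of S has at most 2 distinct eigenvalues in F. Assume that S contains every trace-zero endomorphism u of V with G ⊆ ker u. Then: (a) every u ∈ S leaves G invariant; (b) for every u ∈ S, the induced endomorphism u_G of G has at most one eigenvalue in F; (c) if the endomorphism of V/G induced by u has nonzero trace, then u_G has no eigenvalue in F; (d) if u_G = 0 then the induced endomorphism of V/G has trace zero. -/

import Mathlib

open LinearMap Module

private lemma aux_trace_smulRight {F V : Type*} [Field F] [AddCommGroup V] [Module F V]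
    [FiniteDimensional F V] (φ : V →ₗ[F] F) (y : V) :
    LinearMap.trace F V (φ.smulRight y) = φ y := by
  have h : φ.smulRight y = dualTensorHom F V V (φ ⊗ₜ y) := by
    ext v; simp [dualTensorHom_apply]
  rw [h, trace_eq_contract_apply, contractLeft_apply]

private lemma aux_third {F : Type*} [Field F] (hF : 2 < Cardinal.mk F) (a b : F) :
    ∃ c : F, c ≠ a ∧ c ≠ b := by
  by_contra h
  push_neg at h
  have hsub : (Set.univ : Set F) ⊆ {a, b} := by
    intro x _
    by_cases hx : x = a
    · simp [hx]
    · simp [h x hx]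
  have h1 : Cardinal.mk F ≤ 2 := by
    calc Cardinal.mk F = Cardinal.mk (Set.univ : Set F) := Cardinal.mk_univ.symm
    _ ≤ Cardinal.mk ({a, b} : Set F) := Cardinal.mk_le_mk_of_subset hsub
    _ ≤ 2 := by
        refine le_trans (Cardinal.mk_insert_le ..) ?_
        simp [one_add_one_eq_two]
  exact absurd hF (not_lt.2 h1)

private lemma aux_three_distinct {F : Type*} [Field F] {x y z a b : F}
    (hxy : x ≠ y) (hxz : x ≠ z) (hyz : y ≠ z)
    (hx : x = a ∨ x = b) (hy : y = a ∨ y = b) (hz : z = a ∨ z = b) : False := by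
  rcases hx with rfl | rfl <;> rcases hy with rfl | rfl <;> rcases hz with rfl | rfl <;> simp_all

private lemma aux_frame {F V : Type*} [Field F] [AddCommGroup V] [Module F V]
    [FiniteDimensional F V] (G : Submodule F V) (hG : Module.finrank F (V ⧸ G) = 2) :
    ∃ (φ ψ : V →ₗ[F] F) (e₁ e₂ : V),
      (∀ g ∈ G, φ g = 0) ∧ (∀ g ∈ G, ψ g = 0) ∧
      φ e₁ = 1 ∧ φ e₂ = 0 ∧ ψ e₁ = 0 ∧ ψ e₂ = 1 ∧
      (∀ v : V, φ v = 0 → ψ v = 0 → v ∈ G) ∧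
      (∀ (u : V →ₗ[F] V) (h : G ≤ G.comap u),
        LinearMap.trace F (V ⧸ G) (Submodule.mapQ G G u h) = φ (u e₁) + ψ (u e₂)) := by
  have q : Basis (Fin 2) F (V ⧸ G) := Module.finBasisOfFinrankEq F (V ⧸ G) hG
  obtain ⟨e₁, he₁⟩ := Submodule.mkQ_surjective G (q 0)
  obtain ⟨e₂, he₂⟩ := Submodule.mkQ_surjective G (q 1)
  refine ⟨(q.coord 0).comp G.mkQ, (q.coord 1).comp G.mkQ, e₁, e₂, ?_, ?_, ?_, ?_, ?_, ?_, ?_, ?_⟩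
  · intro g hg; simp [Submodule.Quotient.mk_eq_zero G |>.2 hg]
  · intro g hg; simp [Submodule.Quotient.mk_eq_zero G |>.2 hg]
  · simp [he₁]
  · simp [he₂]
  · simp [he₁]
  · simp [he₂]
  · intro v h0 h1
    simp only [LinearMap.comp_apply, Basis.coord_apply] at h0 h1
    have hv : G.mkQ v = 0 := by
      apply q.repr.injective
      ext i
      fin_cases i <;> simp [← Submodule.mkQ_apply, h0, h1]
    exact (Submodule.Quotient.mk_eq_zero G).1 hv
  · intro u h
    rw [LinearMap.trace_eq_matrix_trace F q]
    rw [Matrix.trace]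
    simp only [Fin.sum_univ_two, Matrix.diag_apply, LinearMap.toMatrix_apply]
    rw [← he₁, ← he₂]
    simp [Submodule.mkQ_apply, Submodule.mapQ_apply, Basis.coord_apply]


/-- Splitting Lemma for Hurdles: V is n-dimensional (n ≥ 3) over a field with more than
2 elements, G a codimension-2 subspace, and S ⊆ End(V) a subspace all of whose elements
have at most 2 distinct eigenvalues in F, containing every trace-zero endomorphism
vanishing on G. Then every u ∈ S leaves G invariant, the restriction u_G has at most
one eigenvalue in F, u_G has no eigenvalue in F when the induced map on V/G has
nonzero trace, and the induced map on V/G has trace zero whenever u_G = 0. -/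
theorem stmt15 {F V : Type*} [Field F] [AddCommGroup V] [Module F V]
    [FiniteDimensional F V] {n : ℕ} (hn : 3 ≤ n) (hV : Module.finrank F V = n)
    (hF : 2 < Cardinal.mk F)
    (G : Submodule F V) (hG : Module.finrank F (V ⧸ G) = 2)
    (S : Submodule F (V →ₗ[F] V))
    (hspec : ∀ u ∈ S, ∃ a b : F, ∀ c : F, Module.End.HasEigenvalue u c → c = a ∨ c = b)
    (hcontain : ∀ u : V →ₗ[F] V, LinearMap.trace F V u = 0 →
      (∀ x ∈ G, u x = 0) → u ∈ S) :
    ∀ u ∈ S, ∃ hinv : ∀ x ∈ G, u x ∈ G,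
      {a : F | Module.End.HasEigenvalue (LinearMap.restrict u hinv) a}.Subsingleton ∧
      (LinearMap.trace F (V ⧸ G)
          (Submodule.mapQ G G u (fun x hx => Submodule.mem_comap.mpr (hinv x hx))) ≠ 0 →
        ∀ a : F, ¬ Module.End.HasEigenvalue (LinearMap.restrict u hinv) a) ∧
      (LinearMap.restrict u hinv = 0 →
        LinearMap.trace F (V ⧸ G)
          (Submodule.mapQ G G u (fun x hx => Submodule.mem_comap.mpr (hinv x hx))) = 0) := by
  classical
  intro u hu
  obtain ⟨φ, ψ, e₁, e₂, hφG, hψG, hφ1, hφ2, hψ1, hψ2, hcomp, htrace⟩ := aux_frame G hG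
  -- membership of rank-one perturbations
  have hmem : ∀ (θ : V →ₗ[F] F) (y : V), (∀ g ∈ G, θ g = 0) → θ y = 0 → θ.smulRight y ∈ S := by
    intro θ y hθ hy
    refine hcontain _ ?_ ?_
    · rw [aux_trace_smulRight]; exact hy
    · intro g hg; simp [hθ g hg]
  -- a nonzero vector in G
  have hGdim : Module.finrank F G = n - 2 := by
    have h := Submodule.finrank_quotient_add_finrank G
    rw [hG, hV] at h
    omega
  have hGne : ∃ x : V, x ∈ G ∧ x ≠ 0 := by
    have : G ≠ ⊥ := by
      intro h
      rw [h, finrank_bot] at hGdim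
      omega
    obtain ⟨x, hx, hx0⟩ := Submodule.exists_mem_ne_zero_of_ne_bot this
    exact ⟨x, hx, hx0⟩
  by_cases h2 : (2 : F) = 0
  · -- characteristic 2 : the real proof
    obtain ⟨t, ht0, ht1⟩ := aux_third hF 0 1
    -- part (a) : invariance
    have hinv : ∀ x ∈ G, u x ∈ G := by
      by_contra hc
      push_neg at hc
      obtain ⟨x, hxG, hux⟩ := hc
      -- adapted dual frame
      have hframe : ∃ (φ' ψ' : V →ₗ[F] F) (s : V),
          (∀ g ∈ G, φ' g = 0) ∧ (∀ g ∈ G, ψ' g = 0) ∧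
          φ' (u x) = 1 ∧ ψ' (u x) = 0 ∧ φ' s = 0 ∧ ψ' s = 1 := by
        by_cases hp : φ (u x) ≠ 0
        · refine ⟨(φ (u x))⁻¹ • φ, ψ - (ψ (u x) * (φ (u x))⁻¹) • φ, e₂, ?_, ?_, ?_, ?_, ?_, ?_⟩
          · intro g hg; simp [hφG g hg]
          · intro g hg; simp [hφG g hg, hψG g hg]
          · simp [inv_mul_cancel₀ hp]
          · simp; field_simp; ring
          · simp [hφ2]
          · simp [hφ2, hψ2]
        · push_neg at hp
          have hr : ψ (u x) ≠ 0 := by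
            intro hr
            exact hux (hcomp _ hp hr)
          refine ⟨(ψ (u x))⁻¹ • ψ, φ, e₁, ?_, ?_, ?_, ?_, ?_, ?_⟩
          · intro g hg; simp [hψG g hg]
          · intro g hg; simp [hφG g hg]
          · simp [inv_mul_cancel₀ hr]
          · exact hp
          · simp [hψ1]
          · exact hφ1
      obtain ⟨φ', ψ', s, hφ'G, hψ'G, hφ'ux, hψ'ux, hφ's, hψ's⟩ := hframe
      set γ : F := ψ' (u s) with hγ
      set β : F := φ' (u (u x)) with hβ
      set σ : F := β + γ with hσ
      set l₁ : F := σ + 1 with hl₁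
      set l₂ : F := σ + t with hl₂
      set l₃ : F := σ + 1 + t with hl₃
      have hsum : l₁ + l₂ + l₃ = β + γ := by
        rw [hl₁, hl₂, hl₃, hσ]; linear_combination (β + γ + 1 + t) * h2
      set σ₂ : F := l₁ * l₂ + l₁ * l₃ + l₂ * l₃ with hσ₂
      set σ₃ : F := l₁ * l₂ * l₃ with hσ₃
      set α : F := γ * β - σ₂ with hα
      set ε : F := γ * α + σ₃ with hε
      set y : V := α • x + β • (u x) + s - u (u x) with hy
      set z : V := ε • x + γ • s - u s with hz
      have hφ'x : φ' x = 0 := hφ'G x hxG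
      have hψ'x : ψ' x = 0 := hψ'G x hxG
      have hφ'y : φ' y = 0 := by
        rw [hy]; simp [map_add, map_sub, map_smul, hφ'x, hφ'ux, hφ's, hβ]
      have hψ'z : ψ' z = 0 := by
        rw [hz]; simp [map_add, map_sub, map_smul, hψ'x, hψ's, hγ]
      set w : V →ₗ[F] V := u + φ'.smulRight y + ψ'.smulRight z with hw
      have hwS : w ∈ S := S.add_mem (S.add_mem hu (hmem _ _ hφ'G hφ'y)) (hmem _ _ hψ'G hψ'z)
      have key : ∀ l : F, l * (l - γ) * (l - β) = (l - γ) * α + ε →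
          Module.End.HasEigenvalue w l := by
        intro l hcube
        set v : V := ((l - γ) * (l - β)) • x + (l - γ) • (u x) + s with hv
        have hφ'v : φ' v = l - γ := by
          rw [hv]; simp [map_add, map_smul, hφ'x, hφ'ux, hφ's]
        have hψ'v : ψ' v = 1 := by
          rw [hv]; simp [map_add, map_smul, hψ'x, hψ'ux, hψ's]
        have hv0 : v ≠ 0 := by
          intro h0
          rw [h0, map_zero] at hψ'v
          exact one_ne_zero hψ'v.symm
        have hwv : w v = l • v := by
          rw [hw]
          simp only [LinearMap.add_apply, LinearMap.smulRight_apply, hφ'v, hψ'v, one_smul]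
          rw [hv, hy, hz]
          simp only [map_add, map_smul, map_sub]
          match_scalars <;>
            first
              | ring1
              | linear_combination hcube
              | linear_combination -hcube
        exact Module.End.hasEigenvalue_of_hasEigenvector
          ⟨Module.End.mem_eigenspace_iff.2 hwv, hv0⟩
      have hc₁ : l₁ * (l₁ - γ) * (l₁ - β) = (l₁ - γ) * α + ε := by
        rw [hα, hε, hσ₂, hσ₃]; linear_combination (l₁^2) * hsum
      have hc₂ : l₂ * (l₂ - γ) * (l₂ - β) = (l₂ - γ) * α + ε := by
        rw [hα, hε, hσ₂, hσ₃]; linear_combination (l₂^2) * hsum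
      have hc₃ : l₃ * (l₃ - γ) * (l₃ - β) = (l₃ - γ) * α + ε := by
        rw [hα, hε, hσ₂, hσ₃]; linear_combination (l₃^2) * hsum
      have h12 : l₁ ≠ l₂ := by
        rw [hl₁, hl₂]; intro h; exact ht1 (by linear_combination -h)
      have h13 : l₁ ≠ l₃ := by
        rw [hl₁, hl₃]; intro h; exact ht0 (by linear_combination -h)
      have h23 : l₂ ≠ l₃ := by
        rw [hl₂, hl₃]; intro h; exact one_ne_zero (by linear_combination -h)
      obtain ⟨A, B, hAB⟩ := hspec w hwS
      exact aux_three_distinct h12 h13 h23 (hAB l₁ (key l₁ hc₁)) (hAB l₂ (key l₂ hc₂))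
        (hAB l₃ (key l₃ hc₃))
    refine ⟨hinv, ?_⟩
    set τ : F := φ (u e₁) + ψ (u e₂) with hτdef
    have htr : LinearMap.trace F (V ⧸ G)
        (Submodule.mapQ G G u (fun x hx => Submodule.mem_comap.mpr (hinv x hx))) = τ :=
      htrace u (fun x hx => Submodule.mem_comap.mpr (hinv x hx))
    -- eigenvector extraction for the restriction
    have hres : ∀ l : F, Module.End.HasEigenvalue (LinearMap.restrict u hinv) l →
        ∃ x : V, x ∈ G ∧ x ≠ 0 ∧ u x = l • x := by
      intro l hl
      obtain ⟨⟨x, hxG⟩, hx⟩ := hl.exists_hasEigenvector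
      refine ⟨x, hxG, ?_, ?_⟩
      · intro h0
        exact hx.2 (by simp [Subtype.ext_iff, h0])
      · have h1 := hx.apply_eq_smul
        have h2 := congrArg Subtype.val h1
        simpa [LinearMap.restrict_apply] using h2
    -- the perturbation family
    have hpert : ∀ ν : F, ∃ w : V →ₗ[F] V, w ∈ S ∧ (∀ g ∈ G, w g = u g) ∧
        Module.End.HasEigenvalue w ν ∧ Module.End.HasEigenvalue w (τ - ν) := by
      intro ν
      set a₁ : F := φ (u e₁) with ha₁
      set d₁ : F := ψ (u e₂) with hd₁
      set r : F := a₁ * d₁ - ν * (τ - ν) with hr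
      set y : V := a₁ • e₁ + e₂ - u e₁ with hy
      set z : V := r • e₁ + d₁ • e₂ - u e₂ with hz
      have hφy : φ y = 0 := by
        rw [hy]; simp [map_add, map_sub, map_smul, hφ1, hφ2, ha₁]
      have hψz : ψ z = 0 := by
        rw [hz]; simp [map_add, map_sub, map_smul, hψ1, hψ2, hd₁]
      set w : V →ₗ[F] V := u + φ.smulRight y + ψ.smulRight z with hw
      have hwS : w ∈ S := S.add_mem (S.add_mem hu (hmem _ _ hφG hφy)) (hmem _ _ hψG hψz)
      have hwG : ∀ g ∈ G, w g = u g := by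
        intro g hg
        rw [hw]
        simp [hφG g hg, hψG g hg]
      have key : ∀ θ : F, θ * θ - τ * θ + (a₁ * d₁ - r) = 0 →
          Module.End.HasEigenvalue w θ := by
        intro θ hθ
        set v : V := (θ - d₁) • e₁ + e₂ with hv
        have hφv : φ v = θ - d₁ := by
          rw [hv]; simp [map_add, map_smul, hφ1, hφ2]
        have hψv : ψ v = 1 := by
          rw [hv]; simp [map_add, map_smul, hψ1, hψ2]
        have hv0 : v ≠ 0 := by
          intro h0
          rw [h0, map_zero] at hψv
          exact one_ne_zero hψv.symm
        have hwv : w v = θ • v := by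
          rw [hw]
          simp only [LinearMap.add_apply, LinearMap.smulRight_apply, hφv, hψv, one_smul]
          rw [hv, hy, hz]
          simp only [map_add, map_smul, map_sub]
          match_scalars <;>
            first
              | ring1
              | linear_combination -hθ + (θ - d₁) * hτdef
              | linear_combination hθ - (θ - d₁) * hτdef
              | linear_combination hθ
              | linear_combination -hθ
        exact Module.End.hasEigenvalue_of_hasEigenvector
          ⟨Module.End.mem_eigenspace_iff.2 hwv, hv0⟩
      refine ⟨w, hwS, hwG, key ν (by rw [hr]; ring), key (τ - ν) (by rw [hr]; ring)⟩
    -- part (c) as key statement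
    have keyc : τ ≠ 0 → ∀ l : F, ¬ Module.End.HasEigenvalue (LinearMap.restrict u hinv) l := by
      intro hτ l hl
      obtain ⟨x, hxG, hx0, hxe⟩ := hres l hl
      obtain ⟨ν, hν1, hν2⟩ := aux_third hF l (l + τ)
      obtain ⟨w, hwS, hwG, hwv, hwv'⟩ := hpert ν
      have hle : Module.End.HasEigenvalue w l := by
        refine Module.End.hasEigenvalue_of_hasEigenvector
          ⟨Module.End.mem_eigenspace_iff.2 ?_, hx0⟩
        rw [hwG x hxG, hxe]
      have hd1 : l ≠ ν := fun h => hν1 h.symm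
      have hd2 : l ≠ τ - ν := by
        intro h
        apply hν2
        linear_combination -h + (ν - τ) * h2
      have hd3 : ν ≠ τ - ν := by
        intro h
        apply hτ
        linear_combination -h + ν * h2
      obtain ⟨A, B, hAB⟩ := hspec w hwS
      exact aux_three_distinct hd1 hd2 hd3 (hAB l hle) (hAB ν hwv) (hAB (τ - ν) hwv')
    refine ⟨?_, ?_, ?_⟩
    · -- part (b)
      intro l hl m hm
      by_contra hlm
      obtain ⟨x₁, hx₁G, hx₁0, hx₁e⟩ := hres l hl
      obtain ⟨x₂, hx₂G, hx₂0, hx₂e⟩ := hres m hm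
      obtain ⟨ν, hν1, hν2⟩ := aux_third hF l m
      obtain ⟨w, hwS, hwG, hwv, _⟩ := hpert ν
      have hle : Module.End.HasEigenvalue w l := by
        refine Module.End.hasEigenvalue_of_hasEigenvector
          ⟨Module.End.mem_eigenspace_iff.2 ?_, hx₁0⟩
        rw [hwG x₁ hx₁G, hx₁e]
      have hme : Module.End.HasEigenvalue w m := by
        refine Module.End.hasEigenvalue_of_hasEigenvector
          ⟨Module.End.mem_eigenspace_iff.2 ?_, hx₂0⟩
        rw [hwG x₂ hx₂G, hx₂e]
      obtain ⟨A, B, hAB⟩ := hspec w hwS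
      exact aux_three_distinct hlm (fun h => hν1 h.symm) (fun h => hν2 h.symm)
        (hAB l hle) (hAB m hme) (hAB ν hwv)
    · -- part (c)
      intro htr0 l
      rw [htr] at htr0
      exact keyc htr0 l
    · -- part (d)
      intro hres0
      by_contra htr0
      rw [htr] at htr0
      obtain ⟨x, hxG, hx0⟩ := hGne
      refine keyc htr0 0 ?_
      refine Module.End.hasEigenvalue_of_hasEigenvector
        (x := (⟨x, hxG⟩ : G)) ⟨Module.End.mem_eigenspace_iff.2 ?_, ?_⟩
      · rw [hres0]; simp
      · simp [Submodule.mk_eq_zero, hx0]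
  · -- characteristic ≠ 2 : the hypotheses are contradictory
    exfalso
    set u₀ : V →ₗ[F] V := φ.smulRight e₁ - ψ.smulRight e₂ with hu₀
    have hu₀S : u₀ ∈ S := by
      refine hcontain _ ?_ ?_
      · rw [hu₀, map_sub, aux_trace_smulRight, aux_trace_smulRight, hφ1, hψ2]; ring
      · intro g hg
        rw [hu₀]
        simp [hφG g hg, hψG g hg]
    have he₁0 : e₁ ≠ 0 := by
      intro h
      rw [h, map_zero] at hφ1
      exact one_ne_zero hφ1.symm
    have he₂0 : e₂ ≠ 0 := by
      intro h
      rw [h, map_zero] at hψ2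
      exact one_ne_zero hψ2.symm
    have hev1 : Module.End.HasEigenvalue u₀ 1 := by
      refine Module.End.hasEigenvalue_of_hasEigenvector
        ⟨Module.End.mem_eigenspace_iff.2 ?_, he₁0⟩
      rw [hu₀]
      simp [hφ1, hψ1]
    have hev2 : Module.End.HasEigenvalue u₀ (-1) := by
      refine Module.End.hasEigenvalue_of_hasEigenvector
        ⟨Module.End.mem_eigenspace_iff.2 ?_, he₂0⟩
      rw [hu₀]
      simp [hφ2, hψ2]
    obtain ⟨x, hxG, hx0⟩ := hGne
    have hev0 : Module.End.HasEigenvalue u₀ 0 := by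
      refine Module.End.hasEigenvalue_of_hasEigenvector
        ⟨Module.End.mem_eigenspace_iff.2 ?_, hx0⟩
      rw [hu₀]
      simp [hφG x hxG, hψG x hxG]
    have hd1 : (1 : F) ≠ -1 := by
      intro h
      exact h2 (by linear_combination h)
    have hd2 : (1 : F) ≠ 0 := one_ne_zero
    have hd3 : (-1 : F) ≠ 0 := by
      intro h
      exact one_ne_zero (by linear_combination -h)
    obtain ⟨A, B, hAB⟩ := hspec u₀ hu₀S
    exact aux_three_distinct hd1 hd2 hd3 (hAB 1 hev1) (hAB (-1) hev2) (hAB 0 hev0)
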